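/- A stratified normal propositional program, where no predicate occurring in a negative body belongs to the same or a higher stratum than the head, has at most one answer set. Specifically: if P is a finite normal propositional program and there is a mapping strat : Atoms → ℕ such that for every rule r, strat(head(r)) ≥ strat(a) for all a ∈ body⁺(r) and strat(head(r)) > strat(b) for all b ∈ body⁻(r), then P has at most one answer set. -/
import Mathlib


structure Rule (α : Type) where
  head : α
  pos : Set α
  neg : Set α

variable {α : Type}

def TP (P : Set (Rule α)) (X : Set α) : Set α :=
  {a | ∃ r ∈ P, r.head = a ∧ r.pos ⊆ X}

def Cn (P : Set (Rule α)) : Set α :=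
  ⋂₀ {X | TP P X ⊆ X}

def reduct (P : Set (Rule α)) (X : Set α) : Set (Rule α) :=
  {r' | ∃ r ∈ P, r.neg ∩ X = ∅ ∧ r' = ⟨r.head, r.pos, ∅⟩}

def AnswerSet (P : Set (Rule α)) (X : Set α) : Prop :=
  X = Cn (reduct P X)

def GR (P : Set (Rule α)) (X : Set α) : Set (Rule α) :=
  {r ∈ P | r.pos ⊆ X ∧ r.neg ∩ X = ∅}

def heads (R : Set (Rule α)) : Set α := Rule.head '' R

def negs (R : Set (Rule α)) : Set α := ⋃ r ∈ R, r.neg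

def prefixSet (l : List (Rule α)) (i : ℕ) : Set (Rule α) :=
  {r | ∃ j < i, l[j]? = some r}

def Grounded (R : Set (Rule α)) : Prop :=
  ∃ l : List (Rule α), l.Nodup ∧ (∀ r, r ∈ R ↔ r ∈ l) ∧
    ∀ i (hi : i < l.length), (l.get ⟨i, hi⟩).pos ⊆ heads (prefixSet l i)

lemma mem_Cn_iff {Q : Set (Rule α)} {a : α} : a ∈ Cn Q ↔ ∀ Z, TP Q Z ⊆ Z → a ∈ Z := by
  simp [Cn]

lemma Cn_le {Q : Set (Rule α)} {Z : Set α} (h : TP Q Z ⊆ Z) : Cn Q ⊆ Z :=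
  fun _ ha => mem_Cn_iff.mp ha Z h

lemma Cn_prefixed (Q : Set (Rule α)) : TP Q (Cn Q) ⊆ Cn Q := by
  rintro a ⟨r, hr, h1, h2⟩
  rw [mem_Cn_iff]
  intro Z hZ
  exact hZ ⟨r, hr, h1, fun x hx => mem_Cn_iff.mp (h2 hx) Z hZ⟩

lemma Cn_mono {Q Q' : Set (Rule α)} (h : Q ⊆ Q') : Cn Q ⊆ Cn Q' :=
  Cn_le (fun a ⟨r, hr, h1, h2⟩ => Cn_prefixed Q' ⟨r, h hr, h1, h2⟩)

lemma Cn_restrict (Q : Set (Rule α)) (L : Set α)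
    (hQ : ∀ r ∈ Q, r.head ∈ L → r.pos ⊆ L) :
    Cn Q ∩ L = Cn {r ∈ Q | r.head ∈ L} := by
  set QL := {r ∈ Q | r.head ∈ L} with hQL
  apply Set.Subset.antisymm
  · rintro a ⟨haQ, haL⟩
    have hsub : Cn Q ⊆ Cn QL ∪ Lᶜ := by
      apply Cn_le
      rintro b ⟨r, hr, rfl, h2⟩
      by_cases hb : r.head ∈ L
      · left
        have hpos : r.pos ⊆ Cn QL := by
          intro x hx
          rcases h2 hx with h | h
          · exact h
          · exact absurd (hQ r hr hb hx) h
        exact Cn_prefixed QL ⟨r, ⟨hr, hb⟩, rfl, hpos⟩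
      · exact Or.inr hb
    rcases hsub haQ with h | h
    · exact h
    · exact absurd haL h
  · intro a ha
    refine ⟨Cn_mono (fun r hr => hr.1) ha, ?_⟩
    have : Cn QL ⊆ L := Cn_le (by rintro b ⟨r, ⟨_, hrL⟩, rfl, _⟩; exact hrL)
    exact this ha

theorem stratified_unique_answer_set (α : Type) (P : Set (Rule α)) (hP : P.Finite)
    (strat : α → ℕ)
    (hstrat : ∀ r ∈ P, (∀ a ∈ r.pos, strat a ≤ strat r.head) ∧
                        (∀ b ∈ r.neg, strat b < strat r.head)) :
    ∀ X Y : Set α, AnswerSet P X → AnswerSet P Y → X = Y := by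
  intro X Y hX hY
  have key : ∀ n, X ∩ {a | strat a < n} = Y ∩ {a | strat a < n} := by
    intro n
    induction n with
    | zero => ext a; simp
    | succ n ih =>
      have hXYb : ∀ b, strat b < n → (b ∈ X ↔ b ∈ Y) := by
        intro b hb
        have := Set.ext_iff.mp ih b
        simp only [Set.mem_inter_iff, Set.mem_setOf_eq] at this
        constructor
        · intro h; exact ((this.mp ⟨h, hb⟩).1)
        · intro h; exact ((this.mpr ⟨h, hb⟩).1)
      set L : Set α := {a | strat a < n + 1} with hL
      have hcond : ∀ (W : Set α), ∀ r ∈ reduct P W, r.head ∈ L → r.pos ⊆ L := by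
        rintro W r' ⟨r, hr, hneg, rfl⟩ hhead a ha
        exact lt_of_le_of_lt ((hstrat r hr).1 a ha) hhead
      have hsame : {r ∈ reduct P X | r.head ∈ L} = {r ∈ reduct P Y | r.head ∈ L} := by
        ext r'
        constructor
        · rintro ⟨⟨r, hr, hneg, rfl⟩, hhead⟩
          refine ⟨⟨r, hr, ?_, rfl⟩, hhead⟩
          ext b
          simp only [Set.mem_inter_iff, Set.mem_empty_iff_false, iff_false, not_and]
          intro hb
          have hblt : strat b < n := by
            have h1 := (hstrat r hr).2 b hb
            have h2 : strat r.head < n + 1 := hhead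
            omega
          intro hbY
          have : b ∈ r.neg ∩ X := ⟨hb, (hXYb b hblt).mpr hbY⟩
          rw [hneg] at this
          exact this
        · rintro ⟨⟨r, hr, hneg, rfl⟩, hhead⟩
          refine ⟨⟨r, hr, ?_, rfl⟩, hhead⟩
          ext b
          simp only [Set.mem_inter_iff, Set.mem_empty_iff_false, iff_false, not_and]
          intro hb
          have hblt : strat b < n := by
            have h1 := (hstrat r hr).2 b hb
            have h2 : strat r.head < n + 1 := hhead
            omega
          intro hbX
          have : b ∈ r.neg ∩ Y := ⟨hb, (hXYb b hblt).mp hbX⟩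
          rw [hneg] at this
          exact this
      calc X ∩ L = Cn (reduct P X) ∩ L := by rw [← hX]
        _ = Cn {r ∈ reduct P X | r.head ∈ L} := Cn_restrict _ _ (hcond X)
        _ = Cn {r ∈ reduct P Y | r.head ∈ L} := by rw [hsame]
        _ = Cn (reduct P Y) ∩ L := (Cn_restrict _ _ (hcond Y)).symm
        _ = Y ∩ L := by rw [← hY]
  ext a
  have := Set.ext_iff.mp (key (strat a + 1)) a
  simp only [Set.mem_inter_iff, Set.mem_setOf_eq] at this
  constructor
  · intro h; exact (this.mp ⟨h, Nat.lt_succ_self _⟩).1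
  · intro h; exact (this.mpr ⟨h, Nat.lt_succ_self _⟩).1
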